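/- (Monotonicity, iterated) Let P be a rendez-vous protocol. If C = C_0 → C_1 → ... → C_ℓ = C' is an execution of the non-blocking semantics and D_0 ≥ C_0, then there exist configurations D_1, ..., D_ℓ with D_0 → D_1 → ... → D_ℓ and D_i ≥ C_i for all 1 ≤ i ≤ ℓ. -/

import Mathlib

inductive RVAct (A : Type) where
  | tau : RVAct A
  | send : A → RVAct A
  | recv : A → RVAct A
  deriving DecidableEq

/-- One step of the non-blocking rendez-vous semantics. -/
inductive NBStep {Q A : Type} [DecidableEq Q] (T : Set (Q × RVAct A × Q)) :
    Multiset Q → Multiset Q → Prop where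
  | internal (C : Multiset Q) (q q' : Q)
      (ht : (q, RVAct.tau, q') ∈ T) (hq : 0 < C.count q) :
      NBStep T C (C - {q} + {q'})
  | rdv (C : Multiset Q) (m : A) (q1 q1' q2 q2' : Q)
      (ht1 : (q1, RVAct.send m, q1') ∈ T) (ht2 : (q2, RVAct.recv m, q2') ∈ T)
      (h1 : 0 < C.count q1) (h2 : 0 < C.count q2)
      (h12 : 2 ≤ C.count q1 + C.count q2) :
      NBStep T C (C - {q1, q2} + {q1', q2'})
  | nb (C : Multiset Q) (m : A) (q1 q1' : Q)
      (ht : (q1, RVAct.send m, q1') ∈ T) (h1 : 0 < C.count q1)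
      (hno : ∀ q2 q2', (q2, RVAct.recv m, q2') ∈ T → (C - {q1}).count q2 = 0) :
      NBStep T C (C - {q1} + {q1'})

lemma nbStep_monotone {Q A : Type} [DecidableEq Q] {T : Set (Q × RVAct A × Q)}
    {C C' D : Multiset Q} (h : NBStep T C C') (hCD : C ≤ D) :
    ∃ D', NBStep T D D' ∧ C' ≤ D' := by
  cases h with
  | internal q q' ht hq =>
    refine ⟨D - {q} + {q'}, NBStep.internal D q q' ht
      (lt_of_lt_of_le hq (Multiset.count_le_of_le q hCD)), ?_⟩
    exact add_le_add (tsub_le_tsub_right hCD _) le_rfl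
  | rdv m q1 q1' q2 q2' ht1 ht2 h1 h2 h12 =>
    refine ⟨D - {q1, q2} + {q1', q2'}, NBStep.rdv D m q1 q1' q2 q2' ht1 ht2
      (lt_of_lt_of_le h1 (Multiset.count_le_of_le q1 hCD))
      (lt_of_lt_of_le h2 (Multiset.count_le_of_le q2 hCD))
      (le_trans h12 (add_le_add (Multiset.count_le_of_le q1 hCD)
        (Multiset.count_le_of_le q2 hCD))), ?_⟩
    exact add_le_add (tsub_le_tsub_right hCD _) le_rfl
  | nb m q1 q1' ht h1 hno =>
    by_cases hex : ∃ q2 q2', (q2, RVAct.recv m, q2') ∈ T ∧ 0 < (D - {q1}).count q2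
    · obtain ⟨q2, q2', ht2, hc⟩ := hex
      have hD1 : 0 < D.count q1 := lt_of_lt_of_le h1 (Multiset.count_le_of_le q1 hCD)
      have hno2 := hno q2 q2' ht2
      simp only [Multiset.count_sub, Multiset.count_singleton] at hc hno2
      have hD2 : 0 < D.count q2 := lt_of_lt_of_le hc (Nat.sub_le _ _)
      refine ⟨D - {q1, q2} + {q1', q2'}, NBStep.rdv D m q1 q1' q2 q2' ht ht2 hD1 hD2 ?_, ?_⟩
      · by_cases hqq : q2 = q1
        · subst hqq; simp at hc; omega
        · simp [hqq] at hc; omega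
      · rw [Multiset.le_iff_count]
        intro x
        have hx := Multiset.count_le_of_le x hCD
        simp only [Multiset.count_add, Multiset.count_sub, Multiset.insert_eq_cons,
          Multiset.count_cons, Multiset.count_singleton]
        by_cases hx2 : x = q2
        · subst hx2
          split_ifs at hc hno2 ⊢ <;> omega
        · simp only [hx2, if_false]
          split_ifs <;> omega
    · push_neg at hex
      refine ⟨D - {q1} + {q1'}, NBStep.nb D m q1 q1' ht
        (lt_of_lt_of_le h1 (Multiset.count_le_of_le q1 hCD))
        (fun q2 q2' h2 => Nat.le_zero.mp (hex q2 q2' h2)), ?_⟩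
      exact add_le_add (tsub_le_tsub_right hCD _) le_rfl

/-- iterated monotonicity of the non-blocking semantics. -/
theorem nbStep_monotone_iterated {Q A : Type} [DecidableEq Q]
    (T : Set (Q × RVAct A × Q)) (ℓ : ℕ) (Cs : ℕ → Multiset Q)
    (hsteps : ∀ i, i < ℓ → NBStep T (Cs i) (Cs (i + 1)))
    (D0 : Multiset Q) (hD0 : Cs 0 ≤ D0) :
    ∃ Ds : ℕ → Multiset Q, Ds 0 = D0 ∧
      (∀ i, i < ℓ → NBStep T (Ds i) (Ds (i + 1))) ∧
      (∀ i, i ≤ ℓ → Cs i ≤ Ds i) := by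
  induction ℓ with
  | zero =>
    exact ⟨fun _ => D0, rfl, fun i hi => absurd hi (Nat.not_lt_zero i),
      fun i hi => by simpa [Nat.le_zero.mp hi] using hD0⟩
  | succ n ih =>
    obtain ⟨Ds, hDs0, hDsstep, hDsle⟩ :=
      ih (fun i hi => hsteps i (Nat.lt_succ_of_lt hi))
    obtain ⟨D', hD'step, hD'le⟩ :=
      nbStep_monotone (hsteps n (Nat.lt_succ_self n)) (hDsle n le_rfl)
    refine ⟨fun i => if i ≤ n then Ds i else D', by simp [hDs0], ?_, ?_⟩
    · intro i hi
      rcases Nat.lt_succ_iff_lt_or_eq.mp hi with hi | hi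
      · simp only [Nat.le_of_lt hi, if_pos, hi, if_pos (Nat.succ_le_of_lt hi)]
        exact hDsstep i hi
      · subst hi
        simp only [le_rfl, if_pos, Nat.not_succ_le_self, if_neg]
        exact hD'step
    · intro i hi
      rcases Nat.le_succ_iff_eq_or_le.mp hi with hi | hi
      · subst hi
        simpa [Nat.not_succ_le_self] using hD'le
      · simpa [hi] using hDsle i hi
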